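/- Let n ≥ 1, let A0 ∈ ℝ^{n×n}, B0, E0 ∈ ℝ^{n×1}, C0 ∈ ℝ^{1×n}. Assume (A0, C0) is observable and that for every z ∈ ℂ the matrix [[A0 − z·I_n, E0], [C0, 0]] has rank n+1. Let A = [[A0, E0], [0_{1×n}, 1]], B = (B0; 0), C = [C0, 0], E = (0, …, 0, 1)ᵀ ∈ ℝ^{n+1}, and let L ∈ ℝ^{n+1} be an observer gain such that the characteristic polynomial of A − L·C equals X^{n+1} (all observer eigenvalues at the origin). Let f : ℕ → ℝ, u : ℕ → ℝ, x : ℕ → ℝ^n satisfy x(k+1) = A0 x(k) + B0 u(k) + E0 f(k) for all k, set y(k) = C0 x(k), and let X̂ : ℕ → ℝ^{n+1} satisfy X̂(k+1) = A X̂(k) + B u(k) + L (y(k) − C X̂(k)) for all k, with arbitrary initial condition X̂(0). Then for every k ≥ n+2, the last component f̂(k) of X̂(k) satisfies f̂(k) = f(k−n−1). -/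

import Mathlib

open Matrix Polynomial Finset

/-- The observability matrix of the pair `(M, c)`: rows `c, c*M, …, c*M^(m-1)`. -/
noncomputable def obsMat {m : ℕ} (M : Matrix (Fin m) (Fin m) ℝ)
    (c : Matrix (Fin 1) (Fin m) ℝ) : Matrix (Fin m) (Fin m) ℝ :=
  Matrix.of fun i j => (c * M ^ (i : ℕ)) 0 j

/-- The Rosenbrock system matrix `[[A0 - z I, E0], [C0, 0]]` with entries coerced to `ℂ`. -/
noncomputable def rosenbrock (n : ℕ) (A0 : Matrix (Fin n) (Fin n) ℝ)
    (E0 : Matrix (Fin n) (Fin 1) ℝ) (C0 : Matrix (Fin 1) (Fin n) ℝ) (z : ℂ) :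
    Matrix (Fin n ⊕ Fin 1) (Fin n ⊕ Fin 1) ℂ :=
  Matrix.fromBlocks (A0.map Complex.ofReal - z • 1) (E0.map Complex.ofReal)
    (C0.map Complex.ofReal) 0

/-- The augmented system matrix `A = [[A0, E0], [0, 1]]` of size `(n+1) × (n+1)`. -/
noncomputable def augA (n : ℕ) (A0 : Matrix (Fin n) (Fin n) ℝ)
    (E0 : Matrix (Fin n) (Fin 1) ℝ) : Matrix (Fin (n + 1)) (Fin (n + 1)) ℝ :=
  Matrix.of fun i j =>
    if hi : (i : ℕ) < n then
      if hj : (j : ℕ) < n then A0 ⟨i, hi⟩ ⟨j, hj⟩ else E0 ⟨i, hi⟩ 0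
    else
      if (j : ℕ) < n then 0 else 1

/-- The augmented output matrix `C = [C0, 0]` of size `1 × (n+1)`. -/
noncomputable def augC (n : ℕ) (C0 : Matrix (Fin 1) (Fin n) ℝ) :
    Matrix (Fin 1) (Fin (n + 1)) ℝ :=
  Matrix.of fun i j => if hj : (j : ℕ) < n then C0 i ⟨j, hj⟩ else 0

/-- The augmented input matrix `B = (B0; 0)` of size `(n+1) × 1`. -/
noncomputable def augB (n : ℕ) (B0 : Matrix (Fin n) (Fin 1) ℝ) :
    Matrix (Fin (n + 1)) (Fin 1) ℝ :=
  Matrix.of fun i j => if hi : (i : ℕ) < n then B0 ⟨i, hi⟩ j else 0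


section AuxLemmas

lemma aux_charmatrix_mul_sum {ι : Type*} [Fintype ι] [DecidableEq ι]
    (M : Matrix ι ι ℝ) (m : ℕ) (hnil : M ^ (m + 1) = 0) :
    charmatrix M * (∑ k ∈ Finset.range (m + 1),
      (X : ℝ[X]) ^ (m - k) • ((C : ℝ →+* ℝ[X]).mapMatrix (M ^ k)))
      = (X : ℝ[X]) ^ (m + 1) • 1 := by
  set Mc : Matrix ι ι ℝ[X] := (C : ℝ →+* ℝ[X]).mapMatrix M with hMc
  have hpow : ∀ k : ℕ, ((C : ℝ →+* ℝ[X]).mapMatrix (M ^ k) : Matrix ι ι ℝ[X]) = Mc ^ k := by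
    intro k; rw [hMc, map_pow]
  have hch : charmatrix M = (X : ℝ[X]) • (1 : Matrix ι ι ℝ[X]) - Mc := by
    ext i j
    by_cases h : i = j
    · subst h; simp [charmatrix_apply_eq, Mc]
    · simp [charmatrix_apply_ne _ _ _ h, one_apply_ne h, Mc]
  rw [hch, Finset.mul_sum]
  have hterm : ∀ k ∈ Finset.range (m + 1),
      ((X : ℝ[X]) • (1 : Matrix ι ι ℝ[X]) - Mc) *
        ((X : ℝ[X]) ^ (m - k) • ((C : ℝ →+* ℝ[X]).mapMatrix (M ^ k)))
      = ((X : ℝ[X]) ^ (m + 1 - k) • Mc ^ k) - ((X : ℝ[X]) ^ (m + 1 - (k+1)) • Mc ^ (k+1)) := by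
    intro k hk
    rw [Finset.mem_range] at hk
    have h1 : m + 1 - k = (m - k) + 1 := by omega
    have h2 : m + 1 - (k + 1) = m - k := by omega
    rw [hpow, h1, h2, sub_mul, smul_mul_assoc, one_mul]
    congr 1
    · rw [smul_smul, ← pow_succ']
    · rw [mul_smul_comm, ← pow_succ']
  rw [Finset.sum_congr rfl hterm, Finset.sum_range_sub' (fun k => (X : ℝ[X]) ^ (m + 1 - k) • Mc ^ k)]
  rw [← hpow (m+1), hnil, map_zero, smul_zero, sub_zero, pow_zero, Nat.sub_zero]

lemma aux_sum_eq_adjugate {ι : Type*} [Fintype ι] [DecidableEq ι]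
    (M : Matrix ι ι ℝ) (m : ℕ) (h : M.charpoly = X ^ (m + 1))
    (h1 : charmatrix M * (∑ k ∈ Finset.range (m + 1),
      (X : ℝ[X]) ^ (m - k) • ((C : ℝ →+* ℝ[X]).mapMatrix (M ^ k))) = (X : ℝ[X]) ^ (m + 1) • 1) :
    (∑ k ∈ Finset.range (m + 1), (X : ℝ[X]) ^ (m - k) • ((C : ℝ →+* ℝ[X]).mapMatrix (M ^ k)))
      = adjugate (charmatrix M) := by
  set N := (∑ k ∈ Finset.range (m + 1), (X : ℝ[X]) ^ (m - k) • ((C : ℝ →+* ℝ[X]).mapMatrix (M ^ k)))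
  have hdet : (charmatrix M).det = (X : ℝ[X]) ^ (m + 1) := h
  have h2 : charmatrix M * adjugate (charmatrix M) = (X : ℝ[X]) ^ (m + 1) • 1 := by
    rw [mul_adjugate, hdet]
  have h3 : adjugate (charmatrix M) * (charmatrix M * N)
      = adjugate (charmatrix M) * (charmatrix M * adjugate (charmatrix M)) := by
    rw [h1, h2]
  rw [← Matrix.mul_assoc, ← Matrix.mul_assoc, adjugate_mul, hdet, smul_mul_assoc, smul_mul_assoc,
    Matrix.one_mul, Matrix.one_mul] at h3
  refine Matrix.ext fun i j => ?_
  have h4 := congrFun (congrFun h3 i) j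
  simp only [Matrix.smul_apply, smul_eq_mul] at h4
  exact mul_left_cancel₀ (pow_ne_zero _ Polynomial.X_ne_zero) h4

lemma aux_adjugate_rr {p : ℕ} (F : Matrix (Fin p) (Fin p) ℝ) (B : Matrix (Fin p) (Fin 1) ℝ)
    (Cb : Matrix (Fin 1) (Fin p) ℝ) :
    adjugate (charmatrix (fromBlocks F B Cb (1 : Matrix (Fin 1) (Fin 1) ℝ)))
      (Sum.inr 0) (Sum.inr 0) = F.charpoly := by
  rw [adjugate_apply, charmatrix_fromBlocks]
  have hupd : (fromBlocks (charmatrix F) (-(B.map C)) (-(Cb.map C))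
        (charmatrix (1 : Matrix (Fin 1) (Fin 1) ℝ))).updateRow (Sum.inr 0)
        (Pi.single (Sum.inr 0) 1)
      = fromBlocks (charmatrix F) (-(B.map C)) 0 1 := by
    refine Matrix.ext fun i j => ?_
    rcases i with a | a
    · rw [Matrix.updateRow_ne (by simp)]
      rcases j with b | b <;> rfl
    · have ha : a = 0 := Subsingleton.elim a 0
      subst ha
      rw [Matrix.updateRow_self]
      rcases j with b | b
      · simp [Pi.single_eq_of_ne, fromBlocks]
      · have hb : b = 0 := Subsingleton.elim b 0
        subst hb
        simp [fromBlocks]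
  rw [hupd, det_fromBlocks_zero₂₁, det_one, mul_one]
  rfl

lemma aux_key_identity {p : ℕ} (F : Matrix (Fin p) (Fin p) ℝ) (E0 : Matrix (Fin p) (Fin 1) ℝ)
    (C0 : Matrix (Fin 1) (Fin p) ℝ) (ℓ : ℝ)
    (hch : (fromBlocks F E0 (-(ℓ • C0)) (1 : Matrix (Fin 1) (Fin 1) ℝ)).charpoly
      = X ^ (p + 1))
    (ρ : ℝ[X]) (hρ : ρ = (fromBlocks (charmatrix F) (-(E0.map C)) (C0.map C) 0).det) :
    F.charpoly * (X - 1) + C ℓ * ρ = X ^ (p + 1) := by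
  classical
  set K := FractionRing ℝ[X]
  set φ : ℝ[X] →+* K := algebraMap ℝ[X] K with hφdef
  have hφ : Function.Injective φ := IsFractionRing.injective _ _
  set ψ : ℝ →+* K := φ.comp (C : ℝ →+* ℝ[X]) with hψdef
  set Pm : Matrix (Fin p) (Fin p) K := (charmatrix F).map φ with hPm
  set E0K : Matrix (Fin p) (Fin 1) K := E0.map ψ with hE0K
  set C0K : Matrix (Fin 1) (Fin p) K := C0.map ψ with hC0K
  have hdetmap : ∀ {q : Type} [Fintype q] [DecidableEq q] (Mt : Matrix q q ℝ[X]),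
      (Mt.map ⇑φ).det = φ Mt.det := by
    intro q _ _ Mt
    rw [← RingHom.mapMatrix_apply, ← RingHom.map_det]
  have hPmdet : Pm.det = φ F.charpoly := by rw [hPm, hdetmap]; rfl
  have hchFne : φ F.charpoly ≠ 0 := by
    intro h0
    exact F.charpoly_monic.ne_zero (hφ (by simpa using h0))
  haveI : Invertible Pm := Pm.invertibleOfIsUnitDet (by
    rw [hPmdet]; exact isUnit_iff_ne_zero.mpr hchFne)
  have hbneg : (-(E0.map C)).map ⇑φ = -E0K := by
    refine Matrix.ext fun i j => ?_
    simp [Matrix.map_apply, hE0K, hψdef]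
  have hblock : (charmatrix (fromBlocks F E0 (-(ℓ • C0)) (1 : Matrix (Fin 1) (Fin 1) ℝ))).map φ
      = fromBlocks Pm (-E0K) (ψ ℓ • C0K)
        ((charmatrix (1 : Matrix (Fin 1) (Fin 1) ℝ)).map φ) := by
    rw [charmatrix_fromBlocks, fromBlocks_map, hbneg]
    have hc : (-(-(ℓ • C0)).map ⇑C).map ⇑φ = ψ ℓ • C0K := by
      refine Matrix.ext fun i j => ?_
      simp [Matrix.map_apply, hC0K, hψdef, mul_comm]
    rw [hc]
  set g : K := (C0K * ⅟Pm * E0K) 0 0 with hg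
  have hi : φ ((X : ℝ[X]) ^ (p + 1)) = φ F.charpoly * (φ (X - C 1) + ψ ℓ * g) := by
    have h1 : ((charmatrix (fromBlocks F E0 (-(ℓ • C0)) (1 : Matrix (Fin 1) (Fin 1) ℝ))).map φ).det
        = φ ((X : ℝ[X]) ^ (p + 1)) := by
      rw [hdetmap]
      exact congrArg φ hch
    have h2 : ((charmatrix (1 : Matrix (Fin 1) (Fin 1) ℝ)).map ⇑φ
        - (ψ ℓ • C0K) * ⅟Pm * (-E0K)).det = φ (X - C 1) + ψ ℓ * g := by
      have hm : ((ψ ℓ • C0K) * ⅟Pm * (-E0K)) = -(ψ ℓ • (C0K * ⅟Pm * E0K)) := by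
        simp only [Matrix.mul_neg, Matrix.smul_mul]
      rw [det_fin_one, hm]
      simp only [Matrix.sub_apply, Matrix.neg_apply, Matrix.smul_apply, smul_eq_mul, Matrix.map_apply]
      have h3 : charmatrix (1 : Matrix (Fin 1) (Fin 1) ℝ) 0 0 = X - C 1 := by
        rw [charmatrix_apply_eq, one_apply_eq]
      rw [h3, sub_neg_eq_add, hg]
    rw [← h1, hblock, det_fromBlocks₁₁, h2, hPmdet]
  have hii : φ ρ = φ F.charpoly * g := by
    have h1 : (fromBlocks (charmatrix F) (-(E0.map C)) (C0.map C) 0).map ⇑φ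
        = fromBlocks Pm (-E0K) C0K 0 := by
      rw [fromBlocks_map, hbneg]
      have hc : (C0.map ⇑C).map ⇑φ = C0K := by
        refine Matrix.ext fun i j => ?_
        simp [Matrix.map_apply, hC0K, hψdef]
      rw [hc]
      have hz : ((0 : Matrix (Fin 1) (Fin 1) ℝ[X]).map ⇑φ) = 0 := Matrix.map_zero _ φ.map_zero
      rw [hz]
    have h2 : ((0 : Matrix (Fin 1) (Fin 1) K) - C0K * ⅟Pm * (-E0K)).det = g := by
      rw [Matrix.mul_neg, zero_sub, neg_neg, det_fin_one, hg]
    rw [hρ, ← hdetmap, h1, det_fromBlocks₁₁, h2, hPmdet]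
  apply hφ
  rw [map_add, _root_.map_mul, _root_.map_mul, hii, hi]
  have hl : φ (C ℓ) = ψ ℓ := rfl
  have h1 : φ ((X : ℝ[X]) - 1) = φ (X - C 1) := by norm_num
  rw [hl, h1]
  ring

lemma aux_det_ne_zero_of_rank {ι : Type*} [Fintype ι] [DecidableEq ι] (M : Matrix ι ι ℂ)
    (h : M.rank = Fintype.card ι) : M.det ≠ 0 := by
  intro h0
  obtain ⟨v, hv, hMv⟩ := (Matrix.exists_mulVec_eq_zero_iff).mpr h0
  have hker : v ∈ LinearMap.ker M.mulVecLin := by simpa using hMv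
  have h1 : 0 < Module.finrank ℂ (LinearMap.ker M.mulVecLin) := by
    rw [Module.finrank_pos_iff]
    exact ⟨⟨⟨v, hker⟩, 0, by simpa [Subtype.ext_iff] using hv⟩⟩
  have h2 := LinearMap.finrank_range_add_finrank_ker M.mulVecLin
  rw [Module.finrank_pi] at h2
  have h3 : Module.finrank ℂ (LinearMap.range M.mulVecLin) = Fintype.card ι := h
  omega

lemma aux_charmatrix_eval {p : ℕ} (M : Matrix (Fin p) (Fin p) ℝ) (z : ℂ) :
    (charmatrix M).map ⇑(eval₂RingHom (Complex.ofRealHom) z)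
      = z • 1 - M.map Complex.ofReal := by
  refine Matrix.ext fun i j => ?_
  by_cases h : i = j
  · subst h
    simp [charmatrix_apply_eq, Matrix.map_apply]
  · simp [charmatrix_apply_ne _ _ _ h, Matrix.map_apply, one_apply_ne h, h]

lemma aux_geom_conclusion (p : ℕ) (q : ℝ[X]) (c : ℝ)
    (h : q * (X - 1) + C c = X ^ (p + 1)) :
    q = ∑ i ∈ Finset.range (p + 1), (X : ℝ[X]) ^ i := by
  have h1 : c = 1 := by
    have h0 := congrArg (Polynomial.eval 1) h
    simpa using h0
  rw [h1] at h
  have h2 : q * (X - 1) = X ^ (p + 1) - 1 := by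
    rw [← h, Polynomial.C_1]
    ring
  have h3 := geom_sum_mul (X : ℝ[X]) (p + 1)
  have hX : (X - 1 : ℝ[X]) ≠ 0 := by
    rw [← Polynomial.C_1]
    exact Polynomial.X_sub_C_ne_zero 1
  exact mul_right_cancel₀ hX (h2.trans h3.symm)

lemma aux_coeff_extract (p : ℕ) (a : ℕ → ℝ)
    (h : (∑ i ∈ Finset.range (p + 1), (X : ℝ[X]) ^ i)
      = ∑ k ∈ Finset.range (p + 1), (X : ℝ[X]) ^ (p - k) * C (a k)) :
    ∀ j ≤ p, a j = 1 := by
  intro j hj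
  have h0 := congrArg (fun q : ℝ[X] => q.coeff (p - j)) h
  simp only [finset_sum_coeff] at h0
  have hL : (∑ i ∈ Finset.range (p + 1), ((X : ℝ[X]) ^ i).coeff (p - j)) = 1 := by
    rw [Finset.sum_congr rfl (fun i _ => Polynomial.coeff_X_pow i (p - j))]
    rw [Finset.sum_ite_eq (Finset.range (p + 1)) (p - j) (fun _ => (1 : ℝ))]
    rw [if_pos (Finset.mem_range.mpr (by omega))]
  have hR : (∑ k ∈ Finset.range (p + 1), ((X : ℝ[X]) ^ (p - k) * C (a k)).coeff (p - j))
      = a j := by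
    have hterm : ∀ k ∈ Finset.range (p + 1),
        ((X : ℝ[X]) ^ (p - k) * C (a k)).coeff (p - j)
        = if k = j then a k else 0 := by
      intro k hk
      rw [Finset.mem_range] at hk
      rw [mul_comm, Polynomial.coeff_C_mul, Polynomial.coeff_X_pow]
      by_cases hkj : k = j
      · subst hkj
        simp
      · rw [if_neg (by omega), if_neg hkj, mul_zero]
    rw [Finset.sum_congr rfl hterm, Finset.sum_ite_eq' (Finset.range (p + 1)) j (fun k => a k),
      if_pos (Finset.mem_range.mpr (by omega))]
  rw [hL, hR] at h0
  exact h0.symm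

end AuxLemmas

section MainAux

lemma aux_rho_const (n : ℕ) (A0 : Matrix (Fin n) (Fin n) ℝ) (E0 : Matrix (Fin n) (Fin 1) ℝ)
    (C0 : Matrix (Fin 1) (Fin n) ℝ)
    (hrank : ∀ z : ℂ, (rosenbrock n A0 E0 C0 z).rank = n + 1) :
    ∃ r : ℝ, (fromBlocks (charmatrix A0) (-(E0.map C)) (C0.map C)
      (0 : Matrix (Fin 1) (Fin 1) ℝ[X])).det = C r := by
  set ρ : ℝ[X] := (fromBlocks (charmatrix A0) (-(E0.map C)) (C0.map C)
      (0 : Matrix (Fin 1) (Fin 1) ℝ[X])).det with hρ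
  have hne : ∀ z : ℂ, (ρ.map (Complex.ofRealHom : ℝ →+* ℂ)).eval z ≠ 0 := by
    intro z
    set χ : ℝ[X] →+* ℂ := eval₂RingHom Complex.ofRealHom z with hχ
    have h1 : (ρ.map (Complex.ofRealHom : ℝ →+* ℂ)).eval z
        = ((fromBlocks (charmatrix A0) (-(E0.map C)) (C0.map C)
            (0 : Matrix (Fin 1) (Fin 1) ℝ[X])).map ⇑χ).det := by
      rw [Polynomial.eval_map, hρ]
      rw [show (eval₂ Complex.ofRealHom z (fromBlocks (charmatrix A0) (-(E0.map C)) (C0.map C)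
            (0 : Matrix (Fin 1) (Fin 1) ℝ[X])).det) = χ ((fromBlocks (charmatrix A0)
            (-(E0.map C)) (C0.map C) (0 : Matrix (Fin 1) (Fin 1) ℝ[X])).det) from rfl]
      rw [RingHom.map_det, RingHom.mapMatrix_apply]
    have h2 : ((fromBlocks (charmatrix A0) (-(E0.map C)) (C0.map C)
            (0 : Matrix (Fin 1) (Fin 1) ℝ[X])).map ⇑χ)
        = fromBlocks (-1 : Matrix (Fin n) (Fin n) ℂ) 0 0 1 * rosenbrock n A0 E0 C0 z := by
      rw [fromBlocks_map, rosenbrock, fromBlocks_multiply]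
      have hb1 : (charmatrix A0).map ⇑χ = z • 1 - A0.map Complex.ofReal := aux_charmatrix_eval A0 z
      have hb2 : (-(E0.map C)).map ⇑χ = -(E0.map Complex.ofReal) := by
        refine Matrix.ext fun i j => ?_
        simp [Matrix.map_apply, hχ]
      have hb3 : (C0.map C).map ⇑χ = C0.map Complex.ofReal := by
        refine Matrix.ext fun i j => ?_
        simp [Matrix.map_apply, hχ]
      have hb4 : ((0 : Matrix (Fin 1) (Fin 1) ℝ[X])).map ⇑χ = 0 :=
        Matrix.map_zero _ χ.map_zero
      rw [hb1, hb2, hb3, hb4]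
      simp only [Matrix.neg_mul, Matrix.one_mul, Matrix.zero_mul, Matrix.mul_zero,
        add_zero, zero_add, neg_sub]
    rw [h1, h2, det_mul, det_fromBlocks_zero₂₁, det_one, mul_one]
    have hd1 : (-1 : Matrix (Fin n) (Fin n) ℂ).det ≠ 0 := by
      rw [show (-1 : Matrix (Fin n) (Fin n) ℂ) = -(1 : Matrix (Fin n) (Fin n) ℂ) from rfl,
        det_neg, det_one, mul_one]
      exact pow_ne_zero _ (neg_ne_zero.mpr one_ne_zero)
    have hd2 : (rosenbrock n A0 E0 C0 z).det ≠ 0 := by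
      apply aux_det_ne_zero_of_rank
      rw [hrank z]
      simp
    exact mul_ne_zero hd1 hd2
  have hd : (ρ.map (Complex.ofRealHom : ℝ →+* ℂ)).degree ≤ 0 := by
    by_contra hdeg
    push_neg at hdeg
    obtain ⟨z, hz⟩ := Complex.exists_root hdeg
    exact hne z hz
  have hdρ : ρ.degree ≤ 0 := by
    rwa [Polynomial.degree_map_eq_of_injective Complex.ofRealHom.injective] at hd
  exact ⟨ρ.coeff 0, Polynomial.eq_C_of_degree_le_zero hdρ⟩

lemma aux_feedback {p : ℕ} (A0 : Matrix (Fin p) (Fin p) ℝ) (E0 : Matrix (Fin p) (Fin 1) ℝ)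
    (C0 : Matrix (Fin 1) (Fin p) ℝ) (L' : Matrix (Fin p) (Fin 1) ℝ) :
    (fromBlocks (charmatrix (A0 - L' * C0)) (-(E0.map C)) (C0.map C)
        (0 : Matrix (Fin 1) (Fin 1) ℝ[X])).det
      = (fromBlocks (charmatrix A0) (-(E0.map C)) (C0.map C)
        (0 : Matrix (Fin 1) (Fin 1) ℝ[X])).det := by
  have hch : charmatrix (A0 - L' * C0) = charmatrix A0 + (L' * C0).map C := by
    refine Matrix.ext fun i j => ?_
    by_cases h : i = j
    · subst h
      simp only [Matrix.add_apply, charmatrix_apply_eq, Matrix.map_apply, Matrix.sub_apply, map_sub]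
      ring
    · simp only [Matrix.add_apply, charmatrix_apply_ne _ _ _ h, Matrix.map_apply, Matrix.sub_apply, map_sub]
      ring
  have hfac : fromBlocks (charmatrix (A0 - L' * C0)) (-(E0.map C)) (C0.map C)
        (0 : Matrix (Fin 1) (Fin 1) ℝ[X])
      = fromBlocks (1 : Matrix (Fin p) (Fin p) ℝ[X]) (L'.map C) 0 1 *
        fromBlocks (charmatrix A0) (-(E0.map C)) (C0.map C) 0 := by
    rw [fromBlocks_multiply, hch, Matrix.map_mul]
    simp only [Matrix.one_mul, Matrix.zero_mul, Matrix.mul_zero, zero_add, add_zero]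
  rw [hfac, det_mul, det_fromBlocks_zero₂₁, det_one, det_one, one_mul, one_mul]

end MainAux

section DynAux

noncomputable def auxEf (n : ℕ) : Matrix (Fin (n + 1)) (Fin 1) ℝ :=
  Matrix.of fun i _ => if (i : ℕ) < n then 0 else 1

noncomputable def auxXt (n : ℕ) (x : ℕ → Matrix (Fin n) (Fin 1) ℝ) (f : ℕ → ℝ) (k : ℕ) :
    Matrix (Fin (n + 1)) (Fin 1) ℝ :=
  Matrix.of fun i _ => if h : (i : ℕ) < n then x k ⟨i, h⟩ 0 else f k

lemma aux_state_step (n : ℕ) (A0 : Matrix (Fin n) (Fin n) ℝ) (B0 E0 : Matrix (Fin n) (Fin 1) ℝ)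
    (f u : ℕ → ℝ) (x : ℕ → Matrix (Fin n) (Fin 1) ℝ)
    (hx : ∀ k, x (k + 1) = A0 * x k + u k • B0 + f k • E0) (k : ℕ) :
    auxXt n x f (k + 1) = augA n A0 E0 * auxXt n x f k + u k • augB n B0
      + (f (k + 1) - f k) • auxEf n := by
  refine Matrix.ext fun i j => ?_
  have hj : j = 0 := Subsingleton.elim j 0
  subst hj
  simp only [Matrix.add_apply, Matrix.smul_apply, smul_eq_mul, mul_apply]
  rw [Fin.sum_univ_castSucc]
  by_cases hi : (i : ℕ) < n
  · have h1 : ∀ jj : Fin n, augA n A0 E0 i (Fin.castSucc jj) * auxXt n x f k (Fin.castSucc jj) 0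
        = A0 ⟨i, hi⟩ jj * x k jj 0 := by
      intro jj
      simp [augA, auxXt, augB, hi, jj.isLt, Fin.eta]
    rw [Finset.sum_congr rfl (fun jj _ => h1 jj)]
    have h2 : augA n A0 E0 i (Fin.last n) * auxXt n x f k (Fin.last n) 0
        = E0 ⟨i, hi⟩ 0 * f k := by
      simp [augA, auxXt, hi]
    rw [h2]
    have h3 : auxXt n x f (k + 1) i 0 = x (k + 1) ⟨i, hi⟩ 0 := by simp [auxXt, hi]
    rw [h3, hx k]
    simp only [Matrix.add_apply, Matrix.smul_apply, smul_eq_mul, mul_apply]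
    simp [augB, auxEf, hi]
    ring
  · have h1 : ∀ jj : Fin n, augA n A0 E0 i (Fin.castSucc jj) * auxXt n x f k (Fin.castSucc jj) 0
        = 0 := by
      intro jj
      simp [augA, hi, jj.isLt]
    rw [Finset.sum_congr rfl (fun jj _ => h1 jj), Finset.sum_const_zero]
    simp [augA, augB, auxEf, auxXt, hi]

lemma aux_output (n : ℕ) (C0 : Matrix (Fin 1) (Fin n) ℝ) (x : ℕ → Matrix (Fin n) (Fin 1) ℝ)
    (f : ℕ → ℝ) (k : ℕ) :
    (augC n C0 * auxXt n x f k) 0 0 = (C0 * x k) 0 0 := by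
  simp only [mul_apply]
  rw [Fin.sum_univ_castSucc]
  have h1 : ∀ jj : Fin n, augC n C0 0 (Fin.castSucc jj) * auxXt n x f k (Fin.castSucc jj) 0
      = C0 0 jj * x k jj 0 := by
    intro jj
    simp [augC, auxXt, jj.isLt, Fin.eta]
  rw [Finset.sum_congr rfl (fun jj _ => h1 jj)]
  simp [augC, auxXt]

lemma aux_scalar (n : ℕ) (L : Matrix (Fin (n + 1)) (Fin 1) ℝ) (S : Matrix (Fin 1) (Fin 1) ℝ) :
    L * S = S 0 0 • L := by
  refine Matrix.ext fun i j => ?_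
  have hj : j = 0 := Subsingleton.elim j 0
  subst hj
  rw [mul_apply, Fin.sum_univ_one, Matrix.smul_apply, smul_eq_mul, mul_comm]

lemma aux_iter {N : Type*} [Fintype N] [DecidableEq N]
    (M : Matrix N N ℝ) (Ef : Matrix N (Fin 1) ℝ) (e : ℕ → Matrix N (Fin 1) ℝ) (d : ℕ → ℝ)
    (h : ∀ k, e (k + 1) = M * e k + d k • Ef) :
    ∀ m k, e (k + m) = M ^ m * e k
      + ∑ j ∈ Finset.range m, d (k + j) • (M ^ (m - 1 - j) * Ef) := by
  intro m
  induction m with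
  | zero => intro k; simp
  | succ m ih =>
    intro k
    rw [show k + (m + 1) = (k + m) + 1 from rfl, h (k + m), ih k]
    rw [Matrix.mul_add, ← Matrix.mul_assoc, ← pow_succ', Matrix.mul_sum]
    have hterm : ∀ j ∈ Finset.range m,
        M * (d (k + j) • (M ^ (m - 1 - j) * Ef)) = d (k + j) • (M ^ (m + 1 - 1 - j) * Ef) := by
      intro j hj
      rw [Finset.mem_range] at hj
      rw [Matrix.mul_smul, ← Matrix.mul_assoc, ← pow_succ',
        show m - 1 - j + 1 = m + 1 - 1 - j from by omega]
    rw [Finset.sum_congr rfl hterm, Finset.sum_range_succ]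
    have hlast : d (k + m) • (M ^ (m + 1 - 1 - m) * Ef) = d (k + m) • Ef := by
      rw [show m + 1 - 1 - m = 0 from by omega, pow_zero, Matrix.one_mul]
    rw [hlast, add_assoc]

end DynAux

lemma aux_block_ident (n : ℕ) (A0 : Matrix (Fin n) (Fin n) ℝ) (E0 : Matrix (Fin n) (Fin 1) ℝ)
    (C0 : Matrix (Fin 1) (Fin n) ℝ) (L : Matrix (Fin (n + 1)) (Fin 1) ℝ) :
    (augA n A0 E0 - L * augC n C0).submatrix ⇑finSumFinEquiv ⇑finSumFinEquiv
      = fromBlocks (A0 - (Matrix.of fun i (_ : Fin 1) => L (Fin.castAdd 1 i) 0) * C0) E0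
        (-(L (Fin.last n) 0 • C0)) 1 := by
  have hLC : ∀ i' j' : Fin (n + 1), (L * augC n C0) i' j' = L i' 0 * augC n C0 0 j' := by
    intro i' j'
    rw [mul_apply, Fin.sum_univ_one]
  refine Matrix.ext fun i j => ?_
  rcases i with a | a <;> rcases j with b | b
  · rw [submatrix_apply, finSumFinEquiv_apply_left, finSumFinEquiv_apply_left, Matrix.sub_apply, hLC,
      fromBlocks_apply₁₁, Matrix.sub_apply]
    congr 1
    · simp [augA, a.isLt, b.isLt, Fin.eta]
    · rw [mul_apply, Fin.sum_univ_one, Matrix.of_apply]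
      simp [augC, b.isLt, Fin.eta]
  · have hb : b = 0 := Subsingleton.elim b 0
    subst hb
    rw [submatrix_apply, finSumFinEquiv_apply_left, finSumFinEquiv_apply_right, Matrix.sub_apply, hLC,
      fromBlocks_apply₁₂]
    simp [augA, augC, a.isLt, Fin.eta]
  · have ha : a = 0 := Subsingleton.elim a 0
    subst ha
    have hlast : (Fin.natAdd n (0 : Fin 1)) = Fin.last n := by
      apply Fin.ext; simp
    rw [submatrix_apply, finSumFinEquiv_apply_right, finSumFinEquiv_apply_left, Matrix.sub_apply, hLC,
      fromBlocks_apply₂₁, hlast]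
    simp [augA, augC, b.isLt, Fin.eta]
  · have ha : a = 0 := Subsingleton.elim a 0
    have hb : b = 0 := Subsingleton.elim b 0
    subst ha; subst hb
    have hlast : (Fin.natAdd n (0 : Fin 1)) = Fin.last n := by
      apply Fin.ext; simp
    rw [submatrix_apply, finSumFinEquiv_apply_right, Matrix.sub_apply, hLC, fromBlocks_apply₂₂, hlast]
    simp [augA, augC]

theorem stmt4 (n : ℕ) (hn : 1 ≤ n)
    (A0 : Matrix (Fin n) (Fin n) ℝ) (B0 E0 : Matrix (Fin n) (Fin 1) ℝ)
    (C0 : Matrix (Fin 1) (Fin n) ℝ)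
    (hobs : IsUnit (obsMat A0 C0).det)
    (hrank : ∀ z : ℂ, (rosenbrock n A0 E0 C0 z).rank = n + 1)
    (L : Matrix (Fin (n + 1)) (Fin 1) ℝ)
    (hL : (augA n A0 E0 - L * augC n C0).charpoly = Polynomial.X ^ (n + 1))
    (f u : ℕ → ℝ) (x : ℕ → Matrix (Fin n) (Fin 1) ℝ)
    (hx : ∀ k, x (k + 1) = A0 * x k + u k • B0 + f k • E0)
    (y : ℕ → ℝ) (hy : ∀ k, y k = (C0 * x k) 0 0)
    (Xh : ℕ → Matrix (Fin (n + 1)) (Fin 1) ℝ)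
    (hXh : ∀ k, Xh (k + 1) = augA n A0 E0 * Xh k + u k • augB n B0
      + (y k - (augC n C0 * Xh k) 0 0) • L) :
    ∀ k, n + 2 ≤ k → Xh k (Fin.last n) 0 = f (k - (n + 1)) := by
  classical
  intro k hk
  set ℓ : ℝ := L (Fin.last n) 0 with hℓdef
  set L' : Matrix (Fin n) (Fin 1) ℝ := Matrix.of fun i (_ : Fin 1) => L (Fin.castAdd 1 i) 0
    with hL'def
  set F : Matrix (Fin n) (Fin n) ℝ := A0 - L' * C0 with hFdef
  set Mf : Matrix (Fin (n + 1)) (Fin (n + 1)) ℝ := augA n A0 E0 - L * augC n C0 with hMfdef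
  set M' : Matrix (Fin n ⊕ Fin 1) (Fin n ⊕ Fin 1) ℝ
    := fromBlocks F E0 (-(ℓ • C0)) (1 : Matrix (Fin 1) (Fin 1) ℝ) with hM'def
  have hsub : Mf.submatrix ⇑finSumFinEquiv ⇑finSumFinEquiv = M' := by
    rw [hMfdef, hM'def, hFdef, hL'def, hℓdef]
    exact aux_block_ident n A0 E0 C0 L
  have hreidx : M' = reindex finSumFinEquiv.symm finSumFinEquiv.symm Mf := by
    rw [reindex_apply]
    simp only [Equiv.symm_symm]
    exact hsub.symm
  have hchM' : M'.charpoly = X ^ (n + 1) := by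
    rw [hreidx, Matrix.charpoly_reindex, hL]
  have hnilM' : M' ^ (n + 1) = 0 := by
    have h0 := M'.aeval_self_charpoly
    rw [hchM'] at h0
    simpa using h0
  have hstar : F.charpoly = ∑ kk ∈ Finset.range (n + 1),
      (X : ℝ[X]) ^ (n - kk) * C ((M' ^ kk) (Sum.inr 0) (Sum.inr 0)) := by
    have h1 := aux_sum_eq_adjugate M' n hchM' (aux_charmatrix_mul_sum M' n hnilM')
    have h2 : adjugate (charmatrix M') (Sum.inr 0) (Sum.inr 0) = F.charpoly := by
      rw [hM'def]
      exact aux_adjugate_rr F E0 (-(ℓ • C0))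
    rw [← h2, ← h1, Matrix.sum_apply]
    refine Finset.sum_congr rfl fun kk _ => ?_
    rw [Matrix.smul_apply, smul_eq_mul, RingHom.mapMatrix_apply, Matrix.map_apply]
  obtain ⟨r, hr⟩ := aux_rho_const n A0 E0 C0 hrank
  have hkey : F.charpoly * (X - 1) + C (ℓ * r) = X ^ (n + 1) := by
    have h1 := aux_key_identity F E0 C0 ℓ (by rw [← hM'def]; exact hchM')
      ((fromBlocks (charmatrix F) (-(E0.map C)) (C0.map C) 0).det) rfl
    have h2 : (fromBlocks (charmatrix F) (-(E0.map C)) (C0.map C)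
        (0 : Matrix (Fin 1) (Fin 1) ℝ[X])).det = C r := by
      rw [hFdef, aux_feedback A0 E0 C0 L']
      exact hr
    rw [h2, ← Polynomial.C_mul] at h1
    exact h1
  have hgeom := aux_geom_conclusion n F.charpoly (ℓ * r) hkey
  have hcoef := aux_coeff_extract n (fun kk => (M' ^ kk) (Sum.inr 0) (Sum.inr 0))
    (hgeom.symm.trans hstar)
  have hlastidx : (finSumFinEquiv (Sum.inr (0 : Fin 1)) : Fin (n + 1)) = Fin.last n := by
    rw [finSumFinEquiv_apply_right]
    apply Fin.ext
    simp
  have hpow : ∀ j ≤ n, (Mf ^ j) (Fin.last n) (Fin.last n) = 1 := by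
    intro j hj
    have h1 : M' ^ j = reindex finSumFinEquiv.symm finSumFinEquiv.symm (Mf ^ j) := by
      rw [hreidx, ← reindexAlgEquiv_apply ℝ ℝ finSumFinEquiv.symm Mf, ← map_pow,
        reindexAlgEquiv_apply]
    have h2 := hcoef j hj
    simp only [h1, reindex_apply, Equiv.symm_symm, submatrix_apply, hlastidx] at h2
    exact h2
  have hnilMf : Mf ^ (n + 1) = 0 := by
    have h0 := Mf.aeval_self_charpoly
    rw [hL] at h0
    simpa using h0
  set e : ℕ → Matrix (Fin (n + 1)) (Fin 1) ℝ := fun kk => auxXt n x f kk - Xh kk with hedef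
  have herr : ∀ kk, e (kk + 1) = Mf * e kk + (f (kk + 1) - f kk) • auxEf n := by
    intro kk
    have hyk : y kk - (augC n C0 * Xh kk) 0 0
        = (augC n C0 * (auxXt n x f kk - Xh kk)) 0 0 := by
      rw [hy kk, ← aux_output n C0 x f kk, Matrix.mul_sub, Matrix.sub_apply]
    simp only [hedef]
    rw [aux_state_step n A0 B0 E0 f u x hx kk, hXh kk, hyk]
    rw [show ((augC n C0 * (auxXt n x f kk - Xh kk)) 0 0) • L
        = L * (augC n C0 * (auxXt n x f kk - Xh kk)) from (aux_scalar n L _).symm]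
    rw [hMfdef]
    rw [Matrix.sub_mul, Matrix.mul_sub (augA n A0 E0), Matrix.mul_assoc L (augC n C0)]
    abel
  obtain ⟨k', rfl⟩ : ∃ k', k = k' + (n + 1) := ⟨k - (n + 1), by omega⟩
  have hit := aux_iter Mf (auxEf n) e (fun kk => f (kk + 1) - f kk) herr (n + 1) k'
  rw [hnilMf, Matrix.zero_mul, zero_add] at hit
  have hentry := congrFun (congrFun hit (Fin.last n)) 0
  rw [Matrix.sum_apply] at hentry
  have hbig : e (k' + (n + 1)) (Fin.last n) 0
      = ∑ j ∈ Finset.range (n + 1), (f (k' + j + 1) - f (k' + j)) := by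
    refine hentry.trans (Finset.sum_congr rfl fun j hj => ?_)
    rw [Finset.mem_range] at hj
    rw [Matrix.smul_apply, smul_eq_mul]
    have h1 : (Mf ^ (n + 1 - 1 - j) * auxEf n) (Fin.last n) 0
        = (Mf ^ (n + 1 - 1 - j)) (Fin.last n) (Fin.last n) := by
      rw [mul_apply, Fin.sum_univ_castSucc]
      have hz : ∀ jj : Fin n, (Mf ^ (n + 1 - 1 - j)) (Fin.last n) (Fin.castSucc jj)
          * auxEf n (Fin.castSucc jj) 0 = 0 := by
        intro jj
        simp [auxEf, jj.isLt]
      rw [Finset.sum_congr rfl (fun jj _ => hz jj), Finset.sum_const_zero, zero_add]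
      simp [auxEf]
    rw [h1, hpow (n + 1 - 1 - j) (by omega), mul_one]
  have htel : ∑ j ∈ Finset.range (n + 1), (f (k' + j + 1) - f (k' + j))
      = f (k' + (n + 1)) - f k' := by
    have h0 := Finset.sum_range_sub (fun i => f (k' + i)) (n + 1)
    simpa [add_assoc] using h0
  rw [htel] at hbig
  have hXtv : auxXt n x f (k' + (n + 1)) (Fin.last n) 0 = f (k' + (n + 1)) := by
    simp [auxXt]
  have hXhV : Xh (k' + (n + 1)) (Fin.last n) 0 = f k' := by
    simp only [hedef, Matrix.sub_apply] at hbig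
    rw [hXtv] at hbig
    linarith
  rw [hXhV]
  congr 1
  omega
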